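/- Let (μ, W) be a matrix weight with all moments finite and μ ≠ 0, and suppose that for some n ∈ ℕ and some real c > 0 the even moment satisfies M_{2n} = ∫ x^{2n} W(x) dμ(x) = c·I. Then every T ∈ 𝒜 is Hermitian, and hence 𝒜 = A_h: for every T, T W(x) = W(x) T* μ-almost everywhere if and only if T = T* and T W(x) = W(x) T μ-almost everywhere. -/

import Mathlib

open Matrix MeasureTheory ComplexOrder

attribute [local instance] Matrix.normedAddCommGroup Matrix.normedSpace

/-- If a matrix weight `(μ, W)` with all moments finite and `μ ≠ 0` has some even moment
`M_{2n} = c • I` with `c > 0`, then every `T ∈ 𝒜` is Hermitian and `𝒜 = A_h`. -/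
theorem A_eq_Ah_of_even_moment_scalar (N : ℕ) (hN : 1 ≤ N)
    (μ : Measure ℝ) [SigmaFinite μ] (hμ : μ ≠ 0)
    (W : ℝ → Matrix (Fin N) (Fin N) ℂ)
    (hWmeas : ∀ i j, Measurable fun x => W x i j)
    (hWpos : ∀ᵐ x ∂μ, (W x).PosDef)
    (hmom : ∀ n : ℕ, @Integrable (Matrix (Fin N) (Fin N) ℂ) _ SeminormedAddGroup.toContinuousENorm _ _ (fun x : ℝ => (x : ℂ) ^ n • W x) μ)
    (n : ℕ) (c : ℝ) (hc : 0 < c)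
    (hM : (∫ x : ℝ, (x : ℂ) ^ (2 * n) • W x ∂μ) =
      (c : ℂ) • (1 : Matrix (Fin N) (Fin N) ℂ)) :
    (∀ T : Matrix (Fin N) (Fin N) ℂ,
      (∀ᵐ x ∂μ, T * W x = W x * Tᴴ) → T = Tᴴ) ∧
    (∀ T : Matrix (Fin N) (Fin N) ℂ,
      (∀ᵐ x ∂μ, T * W x = W x * Tᴴ) ↔
        (T = Tᴴ ∧ ∀ᵐ x ∂μ, T * W x = W x * T)) := by
  have key : ∀ T : Matrix (Fin N) (Fin N) ℂ,
      (∀ᵐ x ∂μ, T * W x = W x * Tᴴ) → T = Tᴴ := by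
    intro T hT
    set L : Matrix (Fin N) (Fin N) ℂ →L[ℂ] Matrix (Fin N) (Fin N) ℂ :=
      (LinearMap.mulLeft ℂ T).toContinuousLinearMap with hL
    set R : Matrix (Fin N) (Fin N) ℂ →L[ℂ] Matrix (Fin N) (Fin N) ℂ :=
      (LinearMap.mulRight ℂ Tᴴ).toContinuousLinearMap with hR
    have h1 : (∫ x, T * ((x : ℂ) ^ (2 * n) • W x) ∂μ) =
        T * (∫ x, (x : ℂ) ^ (2 * n) • W x ∂μ) := by
      have := L.integral_comp_comm (hmom (2 * n))
      exact this
    have h2 : (∫ x, ((x : ℂ) ^ (2 * n) • W x) * Tᴴ ∂μ) =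
        (∫ x, (x : ℂ) ^ (2 * n) • W x ∂μ) * Tᴴ := by
      have := R.integral_comp_comm (hmom (2 * n))
      exact this
    have heq : (∫ x, T * ((x : ℂ) ^ (2 * n) • W x) ∂μ) =
        (∫ x, ((x : ℂ) ^ (2 * n) • W x) * Tᴴ ∂μ) := by
      refine integral_congr_ae ?_
      filter_upwards [hT] with x hx
      rw [mul_smul_comm, smul_mul_assoc, hx]
    have hfin : T * ((c : ℂ) • 1) = ((c : ℂ) • 1) * Tᴴ := by
      rw [← hM, ← h1, ← h2, heq]
    have hsm : (c : ℂ) • T = (c : ℂ) • Tᴴ := by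
      simpa [mul_smul_comm, smul_mul_assoc] using hfin
    have hc' : (c : ℂ) ≠ 0 := by
      exact_mod_cast ne_of_gt hc
    exact smul_right_injective _ hc' hsm
  refine ⟨key, fun T => ⟨fun hT => ?_, fun ⟨h1, h2⟩ => ?_⟩⟩
  · have hTh := key T hT
    refine ⟨hTh, ?_⟩
    filter_upwards [hT] with x hx
    rw [hx, ← hTh]
  · filter_upwards [h2] with x hx
    rw [hx, ← h1]
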